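/- Under the Harten setup, let (ρ, V, p) and (ρ′, V′, p′) be two fluid states and let η > 0 be a real number such that W(ρ′, V′, p′) = η • W(ρ, V, p) (equality of vectors in ℝ^{d+2}). Then F^{(i)}(ρ′, V′, p′) = η^β • F^{(i)}(ρ, V, p) for every i ∈ {1,…,d}. That is, the Euler fluxes are homogeneous of degree β with respect to Harten's entropy variables. -/

import Mathlib

/-- Harten's entropy variables. -/
noncomputable def hartenW (d : ℕ) (γ α ρ p : ℝ) (V : Fin d → ℝ) : Fin (d + 2) → ℝ :=
  fun j =>
    (ρ / p) * (p * ρ ^ (-γ)) ^ (1 / (α + γ)) *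
      (Fin.cons (α := fun _ => ℝ) (-(α / (γ - 1)) * (p / ρ) - (∑ i, V i ^ 2) / 2)
        (Fin.snoc V (-1)) j)

/-- The Euler flux `F^(i) = (ρV_i, ρV_iV + p·e_i, (e+p)V_i) ∈ ℝ^(d+2)`, with
total energy `e = p/(γ−1) + ρ‖V‖²/2`. -/
noncomputable def eulerFlux (d : ℕ) (γ ρ p : ℝ) (V : Fin d → ℝ) (i : Fin d) :
    Fin (d + 2) → ℝ :=
  Fin.cons (α := fun _ => ℝ) (ρ * V i)
    (Fin.snoc (fun j => ρ * V i * V j + p * (if j = i then 1 else 0))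
      ((p / (γ - 1) + ρ * (∑ k, V k ^ 2) / 2 + p) * V i))

/-- Under the Harten setup, the Euler fluxes are homogeneous of degree `β` with
respect to Harten's entropy variables: if `W(ρ', V', p') = η • W(ρ, V, p)` for some
`η > 0`, then `F^(i)(ρ', V', p') = η^β • F^(i)(ρ, V, p)` for every `i`. -/
theorem eulerFlux_homogeneous_in_hartenW
    (d : ℕ) (hd : 1 ≤ d) (γ α β : ℝ) (hγ : 1 < γ) (hα : 0 < α ∨ α < -γ)
    (hβ : β = -(γ + α) / (γ - 1))
    (ρ p : ℝ) (hρ : 0 < ρ) (hp : 0 < p) (V : Fin d → ℝ)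
    (ρ' p' : ℝ) (hρ' : 0 < ρ') (hp' : 0 < p') (V' : Fin d → ℝ)
    (η : ℝ) (hη : 0 < η)
    (hW : hartenW d γ α ρ' p' V' = η • hartenW d γ α ρ p V) :
    ∀ i : Fin d, eulerFlux d γ ρ' p' V' i = η ^ β • eulerFlux d γ ρ p V i := by
  have hγ1 : (0:ℝ) < γ - 1 := by linarith
  have hαγ : α + γ ≠ 0 := by
    rcases hα with h | h
    · exact ne_of_gt (by linarith)
    · exact ne_of_lt (by linarith)
  have hα0 : α ≠ 0 := by
    rcases hα with h | h
    · exact ne_of_gt h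
    · exact ne_of_lt (by linarith)
  set X : ℝ := (p * ρ ^ (-γ)) ^ (1 / (α + γ)) with hXdef
  set X' : ℝ := (p' * ρ' ^ (-γ)) ^ (1 / (α + γ)) with hX'def
  have hXpos : 0 < X := Real.rpow_pos_of_pos (mul_pos hp (Real.rpow_pos_of_pos hρ _)) _
  have hX'pos : 0 < X' := Real.rpow_pos_of_pos (mul_pos hp' (Real.rpow_pos_of_pos hρ' _)) _
  -- last component: prefactors scale by η
  have hlast := congrFun hW ((Fin.last d).succ)
  simp only [hartenW, Fin.cons_succ, Fin.snoc_last, Pi.smul_apply, smul_eq_mul,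
    ← hXdef, ← hX'def] at hlast
  have hcc : ρ' / p' * X' = η * (ρ / p * X) := by linear_combination -hlast
  have hcne : η * (ρ / p * X) ≠ 0 := by positivity
  -- middle components: V' = V
  have hV : V' = V := by
    funext k
    have hk := congrFun hW ((k.castSucc).succ)
    simp only [hartenW, Fin.cons_succ, Fin.snoc_castSucc, Pi.smul_apply, smul_eq_mul,
      ← hXdef, ← hX'def] at hk
    rw [hcc] at hk
    have hk' : η * (ρ / p * X) * V' k = η * (ρ / p * X) * V k := by linear_combination hk
    exact mul_left_cancel₀ hcne hk'
  -- first component: p'/ρ' = p/ρ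
  have h0 := congrFun hW (0 : Fin (d + 2))
  simp only [hartenW, Fin.cons_zero, Pi.smul_apply, smul_eq_mul,
    ← hXdef, ← hX'def, hV] at h0
  rw [hcc] at h0
  have h0'' : η * (ρ / p * X) * (-(α / (γ - 1)) * (p' / ρ') - (∑ x : Fin d, V x ^ 2) / 2) =
      η * (ρ / p * X) * (-(α / (γ - 1)) * (p / ρ) - (∑ x : Fin d, V x ^ 2) / 2) := by
    linear_combination h0
  have h0' := mul_left_cancel₀ hcne h0''
  have hpρ : p' / ρ' = p / ρ := by
    have h1 : α / (γ - 1) * (p' / ρ') = α / (γ - 1) * (p / ρ) := by linarith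
    exact mul_left_cancel₀ (div_ne_zero hα0 (ne_of_gt hγ1)) h1
  -- set t := p'/p and express ρ', p'
  set t : ℝ := p' / p with htdef
  have ht : 0 < t := div_pos hp' hp
  have hp2 : p' = t * p := by rw [htdef, div_mul_cancel₀ p' hp.ne']
  have hr2 : ρ' = t * ρ := by
    have := hpρ
    field_simp [htdef] at this ⊢
    nlinarith [this]
  -- compute X' in terms of X
  have hX'eq : X' = t ^ ((1 - γ) / (α + γ)) * X := by
    rw [hX'def, hXdef, hp2, hr2, Real.mul_rpow ht.le hρ.le]
    have h1 : t * p * (t ^ (-γ) * ρ ^ (-γ)) = (t ^ (1:ℝ) * t ^ (-γ)) * (p * ρ ^ (-γ)) := by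
      rw [Real.rpow_one]; ring
    rw [h1, ← Real.rpow_add ht, Real.mul_rpow (by positivity) (by positivity),
      ← Real.rpow_mul ht.le, mul_one_div]
    rw [show (1:ℝ) + -γ = 1 - γ by ring]
  -- deduce η = t ^ ((1-γ)/(α+γ))
  have hpr : ρ' / p' = ρ / p := by
    rw [div_eq_div_iff hρ'.ne' hρ.ne'] at hpρ
    rw [div_eq_div_iff hp'.ne' hp.ne']
    linarith
  have hη2 : η = t ^ ((1 - γ) / (α + γ)) := by
    have h2 : (ρ / p * X) * η = (ρ / p * X) * t ^ ((1 - γ) / (α + γ)) := by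
      have := hcc
      rw [hpr, hX'eq] at this
      linarith [this]
    exact (mul_left_cancel₀ (by positivity : ρ / p * X ≠ 0) h2)
  have hηβ : η ^ β = t := by
    rw [hη2, ← Real.rpow_mul ht.le]
    rw [show (1 - γ) / (α + γ) * β = 1 by rw [hβ]; field_simp; ring]
    exact Real.rpow_one t
  -- final computation
  intro i
  funext j
  refine Fin.cases ?_ (fun k => ?_) j
  · simp only [eulerFlux, Fin.cons_zero, Pi.smul_apply, smul_eq_mul, hV, hr2, hηβ]
    ring
  · refine Fin.lastCases ?_ (fun m => ?_) k
    · simp only [eulerFlux, Fin.cons_succ, Fin.snoc_last, Pi.smul_apply, smul_eq_mul,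
        hV, hr2, hp2, hηβ]
      ring
    · simp only [eulerFlux, Fin.cons_succ, Fin.snoc_castSucc, Pi.smul_apply, smul_eq_mul,
        hV, hr2, hp2, hηβ]
      ring
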